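/- Let d_n(q,m) be defined by the recursion d_0 = 1, d_n = ∑_{i=1}^n (−1)^{i−1} g_{n−i,n} m^{i(n−i)} d_{n−i}, where g_{k,n} = |Gr_k^n(F_q)| is the Gaussian binomial coefficient. Then, viewing d_n(q,m) as a polynomial in m for fixed n and q, its leading term (degree binom(n,2) in m) has coefficient ∏_{k=2}^n g_{k−1,k} = ∏_{k=2}^n |P^{k-1}(F_q)|. -/
import Mathlib

lemma aux_choose (a b : ℕ) : (a + b).choose 2 = a.choose 2 + b.choose 2 + a * b := by
  induction b with
  | zero => simp
  | succ b ih =>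
    have h1 : (a + b + 1).choose 2 = (a+b).choose 2 + (a+b) := by
      rw [Nat.choose_succ_succ]; simp [Nat.choose_one_right, Nat.add_comm]
    have h2 : (b + 1).choose 2 = b.choose 2 + b := by
      rw [Nat.choose_succ_succ]; simp [Nat.choose_one_right, Nat.add_comm]
    rw [show a + (b+1) = a+b+1 from rfl, Nat.mul_succ]
    omega

theorem stmt_19 (F : Type*) [Field F] [Fintype F] (g : ℕ → ℕ → ℤ)
    (hg : ∀ k n : ℕ, g k n
      = Nat.card {V : Submodule F (Fin n → F) // Module.finrank F V = k})
    (d : ℕ → Polynomial ℤ) (hd0 : d 0 = 1)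
    (hdrec : ∀ n : ℕ, 1 ≤ n →
      d n = ∑ i ∈ Finset.Icc 1 n,
        Polynomial.C ((-1 : ℤ) ^ (i - 1) * g (n - i) n)
          * Polynomial.X ^ (i * (n - i)) * d (n - i)) :
    ∀ n : ℕ, (d n).natDegree = n.choose 2 ∧
      (d n).coeff (n.choose 2) = ∏ k ∈ Finset.Icc 2 n, g (k - 1) k := by
  have hgpos : ∀ k : ℕ, 1 ≤ k → 0 < g (k - 1) k := by
    intro k hk
    obtain ⟨j, rfl⟩ : ∃ j, k = j + 1 := ⟨k - 1, by omega⟩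
    rw [hg]
    have hne : Nonempty {V : Submodule F (Fin (j+1) → F) // Module.finrank F V = (j+1)-1} := by
      refine ⟨⟨LinearMap.ker (LinearMap.proj 0 : (Fin (j+1) → F) →ₗ[F] F), ?_⟩⟩
      have hsurj : Function.Surjective (LinearMap.proj 0 : (Fin (j+1) → F) →ₗ[F] F) := by
        intro x; exact ⟨fun _ => x, rfl⟩
      have h := LinearMap.finrank_range_add_finrank_ker
        (LinearMap.proj 0 : (Fin (j+1) → F) →ₗ[F] F)
      rw [LinearMap.range_eq_top.mpr hsurj, finrank_top, Module.finrank_self,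
        Module.finrank_fin_fun] at h
      omega
    exact_mod_cast Nat.card_pos
  have hg01 : g 0 1 = 1 := by
    rw [hg]
    norm_cast
    rw [Nat.card_eq_one_iff_unique]
    refine ⟨⟨?_⟩, ⟨⟨⊥, finrank_bot F _⟩⟩⟩
    rintro ⟨V, hV⟩ ⟨W, hW⟩
    have hV' : V = ⊥ := Submodule.finrank_eq_zero.mp hV
    have hW' : W = ⊥ := Submodule.finrank_eq_zero.mp hW
    simp_all
  intro n
  induction n using Nat.strong_induction_on with
  | _ n ih =>
    rcases Nat.eq_zero_or_pos n with rfl | hn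
    · simp [hd0]
    -- term degree bound
    have hterm : ∀ i ∈ Finset.Icc 1 n,
        (Polynomial.C ((-1 : ℤ) ^ (i - 1) * g (n - i) n)
          * Polynomial.X ^ (i * (n - i)) * d (n - i)).natDegree
          ≤ n.choose 2 - i.choose 2 := by
      intro i hi
      simp only [Finset.mem_Icc] at hi
      have hdi : (d (n - i)).natDegree = (n - i).choose 2 := (ih (n - i) (by omega)).1
      have h1 := Polynomial.natDegree_mul_le
        (p := Polynomial.C ((-1 : ℤ) ^ (i - 1) * g (n - i) n) * Polynomial.X ^ (i * (n - i)))
        (q := d (n - i))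
      have h2 := Polynomial.natDegree_mul_le
        (p := Polynomial.C ((-1 : ℤ) ^ (i - 1) * g (n - i) n))
        (q := (Polynomial.X : Polynomial ℤ) ^ (i * (n - i)))
      have hch := aux_choose i (n - i)
      rw [show i + (n - i) = n by omega] at hch
      have hXp : ((Polynomial.X : Polynomial ℤ) ^ (i * (n - i))).natDegree = i * (n - i) :=
        Polynomial.natDegree_X_pow _
      have hC : (Polynomial.C ((-1 : ℤ) ^ (i - 1) * g (n - i) n)).natDegree = 0 :=
        Polynomial.natDegree_C _
      omega
    have hdeg_le : ∀ i ∈ Finset.Icc 1 n,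
        (Polynomial.C ((-1 : ℤ) ^ (i - 1) * g (n - i) n)
          * Polynomial.X ^ (i * (n - i)) * d (n - i)).natDegree ≤ n.choose 2 := by
      intro i hi
      exact le_trans (hterm i hi) (Nat.sub_le _ _)
    -- coefficient
    have hN : n.choose 2 = (n - 1).choose 2 + 1 * (n - 1) := by
      have := aux_choose (n - 1) 1
      rw [show n - 1 + 1 = n by omega] at this
      have h12 : Nat.choose 1 2 = 0 := rfl
      omega
    have hcoeff : (d n).coeff (n.choose 2)
        = g (n - 1) n * (d (n - 1)).coeff ((n - 1).choose 2) := by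
      rw [hdrec n hn, Polynomial.finset_sum_coeff]
      rw [Finset.sum_eq_single_of_mem 1 (Finset.mem_Icc.mpr ⟨le_refl 1, hn⟩)]
      · have : Polynomial.C ((-1 : ℤ) ^ (1 - 1) * g (n - 1) n)
            * Polynomial.X ^ (1 * (n - 1)) * d (n - 1)
            = Polynomial.C (g (n - 1) n) * (d (n - 1) * Polynomial.X ^ (1 * (n - 1))) := by
          ring_nf
        rw [this, Polynomial.coeff_C_mul, hN, Polynomial.coeff_mul_X_pow]
      · intro i hi hne
        apply Polynomial.coeff_eq_zero_of_natDegree_lt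
        refine lt_of_le_of_lt (hterm i hi) ?_
        simp only [Finset.mem_Icc] at hi
        have h2i : 1 ≤ i.choose 2 := by
          calc 1 = Nat.choose 2 2 := by simp
          _ ≤ i.choose 2 := Nat.choose_le_choose 2 (by omega)
        have hle : i.choose 2 ≤ n.choose 2 := Nat.choose_le_choose 2 (by omega)
        -- need i.choose 2 ≤ n.choose 2 strictness isn't needed; need sub strict
        omega
    have hprod : (d n).coeff (n.choose 2) = ∏ k ∈ Finset.Icc 2 n, g (k - 1) k := by
      rw [hcoeff, (ih (n - 1) (by omega)).2]
      rcases Nat.lt_or_ge n 2 with h2 | h2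
      · interval_cases n
        simp [hg01]
      · rw [show n = (n - 1) + 1 by omega, Finset.prod_Icc_succ_top (by omega)]
        rw [show n - 1 + 1 = n by omega]
        ring
    refine ⟨?_, hprod⟩
    have hpos : 0 < ∏ k ∈ Finset.Icc 2 n, g (k - 1) k := by
      apply Finset.prod_pos
      intro k hk
      simp only [Finset.mem_Icc] at hk
      exact hgpos k (by omega)
    refine le_antisymm ?_ (Polynomial.le_natDegree_of_ne_zero (by rw [hprod]; exact hpos.ne'))
    rw [hdrec n hn]
    exact Polynomial.natDegree_sum_le_of_forall_le _ _ hdeg_le
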